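/- Fix an integer N ≥ 2 and a probability vector p on Fin r (the ground-truth distribution). For an integer c ≥ 2, let R(p,c) = 1 - (N/(2·(N-1))) · VI₂(p, u_c) denote the Rand index between the ground truth and a statistically independent balanced candidate partition with c clusters, where u_c is the uniform probability vector on Fin c. Then: (1) if H₂(p) < 1, then R(p,·) is strictly decreasing, i.e., for all integers 2 ≤ c < c', R(p,c') < R(p,c); (2) if H₂(p) = 1, then R(p,·) is constant, i.e., R(p,c) = R(p,c') for all integers c, c' ≥ 2; (3) if H₂(p) > 1, then R(p,·) is strictly increasing, i.e., for all integers 2 ≤ c < c', R(p,c) < R(p,c'). -/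

import Mathlib

/-- The quadratic entropy of a finitely supported probability vector. -/
noncomputable def quadEntropy {α : Type*} [Fintype α] (x : α → ℝ) : ℝ :=
  2 * (1 - ∑ i, (x i) ^ 2)

/-- The quadratic variation of information between (the distributions of)
two statistically independent partitions. -/
noncomputable def VI2 {α β : Type*} [Fintype α] [Fintype β] (p : α → ℝ) (q : β → ℝ) : ℝ :=
  2 * quadEntropy (fun ij : α × β => p ij.1 * q ij.2) - quadEntropy p - quadEntropy q

/-- The uniform (balanced) probability vector on `Fin c`. -/
noncomputable def unif (c : ℕ) : Fin c → ℝ := fun _ => 1 / (c : ℝ)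

/-- The (expected) Rand index between a ground-truth distribution `p` and a
statistically independent balanced candidate partition with `c` clusters. -/
noncomputable def randGT (N : ℕ) {r : ℕ} (p : Fin r → ℝ) (c : ℕ) : ℝ :=
  1 - ((N : ℝ) / (2 * ((N : ℝ) - 1))) * VI2 p (unif c)

lemma randGT_eq {N r : ℕ} (p : Fin r → ℝ) (c : ℕ) (hc : 1 ≤ c) :
    randGT N p c = 1 - ((N : ℝ) / (2 * ((N : ℝ) - 1))) *
      (2 * (∑ i, p i ^ 2) + (2 - 4 * (∑ i, p i ^ 2)) / c) := by
  have hc0 : (c : ℝ) ≠ 0 := Nat.cast_ne_zero.mpr (by omega)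
  have hsum : ∑ ij : Fin r × Fin c, (p ij.1 * unif c ij.2) ^ 2
      = (∑ i, p i ^ 2) / c := by
    rw [Fintype.sum_prod_type, Finset.sum_div]
    refine Finset.sum_congr rfl fun i _ => ?_
    simp only [unif, mul_pow, Finset.sum_const, Finset.card_univ, Fintype.card_fin, nsmul_eq_mul]
    field_simp
  have h2 : ∑ j : Fin c, unif c j ^ 2 = 1 / c := by
    simp [unif]
    field_simp
  rw [randGT, VI2, quadEntropy, quadEntropy, quadEntropy, hsum, h2]
  field_simp
  ring

theorem randGT_bias_of_quadEntropy {N r : ℕ} (hN : 2 ≤ N)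
    (p : Fin r → ℝ) (hp : ∀ i, 0 ≤ p i) (hp1 : ∑ i, p i = 1) :
    (quadEntropy p < 1 →
      ∀ c c' : ℕ, 2 ≤ c → c < c' → randGT N p c' < randGT N p c) ∧
    (quadEntropy p = 1 →
      ∀ c c' : ℕ, 2 ≤ c → 2 ≤ c' → randGT N p c = randGT N p c') ∧
    (1 < quadEntropy p →
      ∀ c c' : ℕ, 2 ≤ c → c < c' → randGT N p c < randGT N p c') := by
  have hN2 : (2:ℝ) ≤ (N:ℝ) := by exact_mod_cast hN
  have hK : 0 < (N : ℝ) / (2 * ((N : ℝ) - 1)) := by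
    apply div_pos (by linarith) (by linarith)
  set K := (N : ℝ) / (2 * ((N : ℝ) - 1)) with hKdef
  set S := ∑ i, p i ^ 2 with hS
  refine ⟨?_, ?_, ?_⟩
  · intro hH c c' h1 h2
    have h42 : 0 < 4 * S - 2 := by
      simp only [quadEntropy, ← hS] at hH; linarith
    have hc0 : (0:ℝ) < c := by exact_mod_cast (by omega : 0 < c)
    have hc'0 : (0:ℝ) < c' := by exact_mod_cast (by omega : 0 < c')
    have hcc : (c:ℝ) < c' := by exact_mod_cast h2
    have hdiv : (2 - 4 * S) / (c:ℝ) < (2 - 4 * S) / c' := by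
      rw [div_lt_div_iff₀ hc0 hc'0]; nlinarith
    have hmul := mul_lt_mul_of_pos_left
      (by linarith : 2 * S + (2 - 4 * S) / (c:ℝ) < 2 * S + (2 - 4 * S) / c') hK
    rw [randGT_eq p c (by omega), randGT_eq p c' (by omega), ← hS]
    linarith
  · intro hH c c' h1 h2
    have h42 : 2 - 4 * S = 0 := by
      simp only [quadEntropy, ← hS] at hH; linarith
    rw [randGT_eq p c (by omega), randGT_eq p c' (by omega), ← hS, h42]
    simp
  · intro hH c c' h1 h2
    have h42 : 0 < 2 - 4 * S := by
      simp only [quadEntropy, ← hS] at hH; linarith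
    have hc0 : (0:ℝ) < c := by exact_mod_cast (by omega : 0 < c)
    have hc'0 : (0:ℝ) < c' := by exact_mod_cast (by omega : 0 < c')
    have hcc : (c:ℝ) < c' := by exact_mod_cast h2
    have hdiv : (2 - 4 * S) / (c':ℝ) < (2 - 4 * S) / c := by
      rw [div_lt_div_iff₀ hc'0 hc0]; nlinarith
    have hmul := mul_lt_mul_of_pos_left
      (by linarith : 2 * S + (2 - 4 * S) / (c':ℝ) < 2 * S + (2 - 4 * S) / c) hK
    rw [randGT_eq p c (by omega), randGT_eq p c' (by omega), ← hS]
    linarith
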